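/- Let X be a topological space, K a group of homeomorphisms of X, and suppose a group G acts on X via an embedding into K such that there is a nonempty open set U ⊆ X with g(U) ∩ h(U) = ∅ for all distinct g, h ∈ G (a demonstrative action). If furthermore K contains, for every nonempty open V ⊆ X, an isomorphic copy of some fixed group H supported on V, then the restricted direct sum ⊕_{g∈G} H embeds into K in such a way that G normalizes the image, permuting the direct summands according to left translation; consequently H ≀ G embeds into K. -/

import Mathlib

/-- The group of self-homeomorphisms of a topological space. -/
instance homeoGroup (X : Type*) [TopologicalSpace X] : Group (X ≃ₜ X) where
  mul f g := g.trans f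
  one := Homeomorph.refl X
  inv := Homeomorph.symm
  mul_assoc f g h := rfl
  one_mul f := rfl
  mul_one f := rfl
  inv_mul_cancel f := by ext x; exact f.symm_apply_apply x

/-- The restricted direct product `⊕_{g ∈ G} K`: functions `G → K` with
all but finitely many values trivial, as a subgroup of `∀ g : G, K`. -/
def restrictedPi (G : Type*) (K : Type*) [Group K] : Subgroup (∀ _ : G, K) where
  carrier := {f | {g | f g ≠ 1}.Finite}
  one_mem' := by simp
  mul_mem' := by
    intro a b ha hb
    refine (ha.union hb).subset ?_
    intro g hg
    by_contra hc
    simp only [Set.mem_union, Set.mem_setOf_eq, not_or, not_not] at hc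
    simp [Set.mem_setOf_eq, Pi.mul_apply, hc.1, hc.2] at hg
  inv_mem' := by
    intro a ha
    simpa using ha

/-- `G` acts on `⊕_{g ∈ G} K` by left translation of coordinates. -/
def restrictedLeftAut (G K : Type*) [Group G] [Group K] :
    G →* MulAut (restrictedPi G K) where
  toFun g :=
    { toFun := fun f => ⟨fun x => (f : ∀ _ : G, K) (g⁻¹ * x), by
        refine (f.2.image (fun y => g * y)).subset ?_
        intro x hx
        exact ⟨g⁻¹ * x, hx, by group⟩⟩
      invFun := fun f => ⟨fun x => (f : ∀ _ : G, K) (g * x), by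
        refine (f.2.image (fun y => g⁻¹ * y)).subset ?_
        intro x hx
        exact ⟨g * x, hx, by group⟩⟩
      left_inv := fun f => by ext x; simp
      right_inv := fun f => by ext x; simp
      map_mul' := fun f f' => rfl }
  map_one' := by ext f x; simp
  map_mul' := fun g g' => by ext f x; simp [mul_assoc]

/-- The restricted wreath product `K ≀ G = (⊕_{g ∈ G} K) ⋊ G`. -/
def RestrictedWreath (K G : Type*) [Group K] [Group G] :=
  (restrictedPi G K) ⋊[restrictedLeftAut G K] G

instance (K G : Type*) [Group K] [Group G] : Group (RestrictedWreath K G) := by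
  unfold RestrictedWreath; infer_instance

section WreathAux

variable {X : Type*} [TopologicalSpace X] {K : Subgroup (X ≃ₜ X)}
  {G H : Type*} [Group G] [Group H]

private lemma hmul_apply (f g : X ≃ₜ X) (x : X) : (f * g) x = f (g x) := rfl

private lemma supp_mem {a : X ≃ₜ X} {A : Set X} (ha : ∀ x ∉ A, a x = x)
    {z : X} (hz : z ∈ A) : a z ∈ A := by
  by_contra h
  have h2 : a (a z) = a z := ha (a z) h
  have h3 : a z = z := a.injective h2
  rw [h3] at h
  exact h hz

private lemma commute_of_supports {a b : X ≃ₜ X} {A B : Set X}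
    (ha : ∀ x ∉ A, a x = x) (hb : ∀ x ∉ B, b x = x) (hAB : Disjoint A B) :
    Commute a b := by
  have hd : ∀ x ∈ A, x ∉ B := fun x hx hx' => (Set.disjoint_left.mp hAB) hx hx'
  have hd' : ∀ x ∈ B, x ∉ A := fun x hx hx' => (Set.disjoint_left.mp hAB) hx' hx
  refine Homeomorph.ext fun x => ?_
  by_cases hxA : x ∈ A
  · rw [hmul_apply, hmul_apply, hb x (hd x hxA), hb _ (hd _ (supp_mem ha hxA))]
  · by_cases hxB : x ∈ B
    · rw [hmul_apply, hmul_apply, ha x hxA, ha _ (hd' _ (supp_mem hb hxB))]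
    · rw [hmul_apply, hmul_apply, hb x hxB, ha x hxA, hb x hxB]

variable (φ : G →* K) (ρ : H →* K) (U : Set X)

/-- The copy of `H` conjugated into the `g`-th translate of `U`. -/
private def cpy (g : G) : H →* K := (MulAut.conj (φ g)).toMonoidHom.comp ρ

private lemma cpy_apply (g : G) (h : H) :
    cpy φ ρ g h = (φ g : K) * ρ h * (φ g : K)⁻¹ := rfl

variable (hρ : ∀ h : H, ∀ x ∉ U, (ρ h : X ≃ₜ X) x = x)
  (hdem : ∀ g h : G, g ≠ h →
    Disjoint (⇑(φ g : X ≃ₜ X) '' U) (⇑(φ h : X ≃ₜ X) '' U))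

include hρ in
private lemma cpy_supp (g : G) (h : H) :
    ∀ x ∉ ⇑(φ g : X ≃ₜ X) '' U, ((cpy φ ρ g h : K) : X ≃ₜ X) x = x := by
  intro x hx
  have h1 : ((φ g : K) : X ≃ₜ X).symm x ∉ U := by
    intro hc
    exact hx ⟨_, hc, ((φ g : K) : X ≃ₜ X).apply_symm_apply x⟩
  show ((φ g : K) : X ≃ₜ X) ((ρ h : X ≃ₜ X) (((φ g : K) : X ≃ₜ X).symm x)) = x
  rw [hρ h _ h1]
  exact ((φ g : K) : X ≃ₜ X).apply_symm_apply x

include hρ hdem in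
private lemma cpy_commute {g g' : G} (hgg' : g ≠ g') (h h' : H) :
    Commute (cpy φ ρ g h) (cpy φ ρ g' h') := by
  have hc : Commute ((cpy φ ρ g h : K) : X ≃ₜ X) ((cpy φ ρ g' h' : K) : X ≃ₜ X) :=
    commute_of_supports (cpy_supp φ ρ U hρ g h) (cpy_supp φ ρ U hρ g' h')
      (hdem g g' hgg')
  rw [Commute, SemiconjBy, Subtype.ext_iff, Subgroup.coe_mul, Subgroup.coe_mul]
  exact hc

include hρ hdem in
private lemma cpy_pairwise (f : G → H) (s : Finset G) :
    (↑s : Set G).Pairwise (Function.onFun Commute fun g => cpy φ ρ g (f g)) :=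
  fun x _ y _ hxy => cpy_commute φ ρ U hρ hdem hxy _ _

/-- The finitely-supported product of the conjugated copies. -/
private def iotaAux (f : G → H) (s : Finset G) : K :=
  s.noncommProd (fun g => cpy φ ρ g (f g)) (cpy_pairwise φ ρ U hρ hdem f s)

include hρ hdem in
private lemma iotaAux_subset (f : G → H) {s t : Finset G} (hst : s ⊆ t)
    (hf : ∀ g ∈ t, g ∉ s → f g = 1) :
    iotaAux φ ρ U hρ hdem f t = iotaAux φ ρ U hρ hdem f s := by
  classical
  unfold iotaAux
  have h1 : t = s ∪ (t \ s) := (Finset.union_sdiff_of_subset hst).symm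
  have hz : (t \ s).noncommProd (fun g => cpy φ ρ g (f g))
      (cpy_pairwise φ ρ U hρ hdem f (t \ s)) = 1 := by
    refine (Finset.noncommProd_eq_pow_card _ _ _ 1 ?_).trans (one_pow _)
    intro x hx
    rw [Finset.mem_sdiff] at hx
    rw [hf x hx.1 hx.2, map_one]
  rw [Finset.noncommProd_congr h1 (fun x _ => rfl)
    (cpy_pairwise φ ρ U hρ hdem f t)]
  refine (Finset.noncommProd_union_of_disjoint Finset.disjoint_sdiff _ _).trans ?_
  rw [hz, mul_one]

/-- The support of an element of the restricted product, as a finset. -/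
private noncomputable def suppFinset (f : restrictedPi G H) : Finset G :=
  Set.Finite.toFinset (show {g | (f : ∀ _ : G, H) g ≠ 1}.Finite from f.2)

private lemma mem_suppFinset {f : restrictedPi G H} {g : G} :
    g ∈ suppFinset f ↔ (f : ∀ _ : G, H) g ≠ 1 :=
  Set.Finite.mem_toFinset _

private noncomputable def iotaFun (f : restrictedPi G H) : K :=
  iotaAux φ ρ U hρ hdem (f : ∀ _ : G, H) (suppFinset f)

include hρ hdem in
private lemma iota_spec (f : restrictedPi G H) (s : Finset G)
    (hs : ∀ g ∉ s, (f : ∀ _ : G, H) g = 1) :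
    iotaFun φ ρ U hρ hdem f = iotaAux φ ρ U hρ hdem (f : ∀ _ : G, H) s := by
  classical
  have h1 : iotaAux φ ρ U hρ hdem (f : ∀ _ : G, H) (s ∪ suppFinset f) =
      iotaAux φ ρ U hρ hdem (f : ∀ _ : G, H) (suppFinset f) :=
    iotaAux_subset φ ρ U hρ hdem _ Finset.subset_union_right
      (fun g _ hgt => by simpa [mem_suppFinset] using hgt)
  have h2 : iotaAux φ ρ U hρ hdem (f : ∀ _ : G, H) (s ∪ suppFinset f) =
      iotaAux φ ρ U hρ hdem (f : ∀ _ : G, H) s :=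
    iotaAux_subset φ ρ U hρ hdem _ Finset.subset_union_left
      (fun g _ hgs => hs g hgs)
  exact (h1.symm.trans h2 :)

/-- The embedding `⊕_{g ∈ G} H →* K`. -/
private noncomputable def iotaHom : restrictedPi G H →* K where
  toFun := iotaFun φ ρ U hρ hdem
  map_one' := by
    show iotaFun φ ρ U hρ hdem 1 = 1
    rw [iota_spec φ ρ U hρ hdem 1 ∅ (fun g _ => rfl)]
    exact Finset.noncommProd_empty _ _
  map_mul' := fun f₁ f₂ => by
    show iotaFun φ ρ U hρ hdem (f₁ * f₂) =
      iotaFun φ ρ U hρ hdem f₁ * iotaFun φ ρ U hρ hdem f₂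
    classical
    set s := suppFinset f₁ ∪ suppFinset f₂ with hsdef
    have hs1 : ∀ g ∉ s, (f₁ : ∀ _ : G, H) g = 1 := fun g hg => by
      rw [hsdef, Finset.mem_union] at hg
      push_neg at hg
      simpa [mem_suppFinset] using hg.1
    have hs2 : ∀ g ∉ s, (f₂ : ∀ _ : G, H) g = 1 := fun g hg => by
      rw [hsdef, Finset.mem_union] at hg
      push_neg at hg
      simpa [mem_suppFinset] using hg.2
    have hs12 : ∀ g ∉ s, ((f₁ * f₂ : restrictedPi G H) : ∀ _ : G, H) g = 1 := by
      intro g hg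
      show (f₁ : ∀ _ : G, H) g * (f₂ : ∀ _ : G, H) g = 1
      rw [hs1 g hg, hs2 g hg, mul_one]
    rw [iota_spec φ ρ U hρ hdem _ s hs12, iota_spec φ ρ U hρ hdem f₁ s hs1,
      iota_spec φ ρ U hρ hdem f₂ s hs2]
    unfold iotaAux
    have hcong : ∀ g ∈ s, (fun g => cpy φ ρ g (((f₁ * f₂ : restrictedPi G H) :
        ∀ _ : G, H) g)) g =
        ((fun g => cpy φ ρ g ((f₁ : ∀ _ : G, H) g)) *
          (fun g => cpy φ ρ g ((f₂ : ∀ _ : G, H) g))) g := by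
      intro g _
      show cpy φ ρ g ((f₁ : ∀ _ : G, H) g * (f₂ : ∀ _ : G, H) g) = _
      rw [map_mul]
      rfl
    rw [Finset.noncommProd_congr rfl hcong]
    exact Finset.noncommProd_mul_distrib _ _
      (cpy_pairwise φ ρ U hρ hdem _ s) (cpy_pairwise φ ρ U hρ hdem _ s)
      (fun x _ y _ hxy => cpy_commute φ ρ U hρ hdem hxy _ _)

private lemma noncommProd_image_of_injective {β : Type*} [Monoid β] [DecidableEq G]
    (s : Finset G) (e : G → G) (he : Function.Injective e) (F : G → β)
    (hcomm : ∀ x y : G, x ≠ y → Commute (F x) (F y)) :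
    (s.image e).noncommProd F (fun x _ y _ hxy => hcomm x y hxy) =
      s.noncommProd (fun g => F (e g))
        (fun x _ y _ hxy => hcomm _ _ (fun h => hxy (he h))) := by
  induction s using Finset.cons_induction with
  | empty => simp; exact (Finset.noncommProd_empty _ _).symm
  | cons a s ha ih =>
    have hima : e a ∉ s.image e := by
      simp only [Finset.mem_image, not_exists, not_and]
      intro b hb hba
      exact ha (he hba ▸ hb)
    rw [Finset.cons_eq_insert, Finset.image_insert]
    exact (Finset.noncommProd_insert_of_notMem _ _ _ _ hima).trans
      ((congrArg (F (e a) * ·) ih).trans (Finset.noncommProd_insert_of_notMem _ _ (fun g => F (e g)) _ ha).symm)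

include hρ hdem in
private lemma cpy_conj (g g' : G) (h : H) :
    (φ g : K) * cpy φ ρ g' h * (φ g : K)⁻¹ = cpy φ ρ (g * g') h := by
  rw [cpy_apply, cpy_apply, map_mul]
  simp [mul_assoc]

include hρ hdem in
private lemma iota_conj (g : G) (f : restrictedPi G H) :
    (φ g : K) * iotaHom φ ρ U hρ hdem f * (φ g : K)⁻¹ =
      iotaHom φ ρ U hρ hdem (restrictedLeftAut G H g f) := by
  classical
  have hs : ∀ x ∉ (suppFinset f).image (g * ·),
      ((restrictedLeftAut G H g f : restrictedPi G H) : ∀ _ : G, H) x = 1 := by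
    intro x hx
    show (f : ∀ _ : G, H) (g⁻¹ * x) = 1
    by_contra hc
    exact hx (Finset.mem_image.mpr ⟨g⁻¹ * x, mem_suppFinset.mpr hc, by group⟩)
  have hRHS : iotaHom φ ρ U hρ hdem (restrictedLeftAut G H g f) =
      ((suppFinset f).image (g * ·)).noncommProd
        (fun x => cpy φ ρ x ((f : ∀ _ : G, H) (g⁻¹ * x)))
        (fun x _ y _ hxy => cpy_commute φ ρ U hρ hdem hxy _ _) :=
    iota_spec φ ρ U hρ hdem _ _ hs
  have hLHS : (φ g : K) * iotaHom φ ρ U hρ hdem f * (φ g : K)⁻¹ =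
      (suppFinset f).noncommProd
        (fun g' => (φ g : K) * cpy φ ρ g' ((f : ∀ _ : G, H) g') * (φ g : K)⁻¹)
        (fun x _ y _ hxy => by
          have := cpy_commute φ ρ U hρ hdem (h := (f : ∀ _ : G, H) x)
            (h' := (f : ∀ _ : G, H) y) hxy
          exact (this.map (MulAut.conj (φ g)).toMonoidHom :)) := by
    have := Finset.map_noncommProd (suppFinset f)
      (fun g' => cpy φ ρ g' ((f : ∀ _ : G, H) g'))
      (cpy_pairwise φ ρ U hρ hdem _ _) (MulAut.conj (φ g)).toMonoidHom
    simp [MulAut.conj_apply] at this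
    exact this
  rw [hLHS, hRHS, noncommProd_image_of_injective (s := suppFinset f)
    (e := (g * ·)) (mul_right_injective g)
    (F := fun x => cpy φ ρ x ((f : ∀ _ : G, H) (g⁻¹ * x)))
    (fun x y hxy => cpy_commute φ ρ U hρ hdem hxy _ _)]
  refine Finset.noncommProd_congr rfl (fun x _ => ?_) _
  rw [cpy_conj φ ρ U hρ hdem]
  simp

include hρ hdem in
private lemma iota_fixes {f : restrictedPi G H} {y : X}
    (hy : ∀ g' ∈ suppFinset f, ((cpy φ ρ g' ((f : ∀ _ : G, H) g') : K) : X ≃ₜ X) y = y) :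
    ((iotaHom φ ρ U hρ hdem f : K) : X ≃ₜ X) y = y := by
  show (((suppFinset f).noncommProd (fun g' => cpy φ ρ g' ((f : ∀ _ : G, H) g'))
    (cpy_pairwise φ ρ U hρ hdem _ _) : K) : X ≃ₜ X) y = y
  refine Finset.noncommProd_induction _ _
    (cpy_pairwise φ ρ U hρ hdem _ _) (fun k : K => ((k : X ≃ₜ X)) y = y)
    ?_ rfl hy
  intro a b hpa hpb
  show ((a : X ≃ₜ X) * (b : X ≃ₜ X)) y = y
  rw [hmul_apply, hpb, hpa]

include hρ hdem in
private lemma iota_injective (hρinj : Function.Injective ρ) :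
    Function.Injective (iotaHom φ ρ U hρ hdem) := by
  rw [injective_iff_map_eq_one]
  intro f hf
  by_contra hne
  have hex : ∃ g, (f : ∀ _ : G, H) g ≠ 1 := by
    by_contra hc
    push_neg at hc
    exact hne (Subtype.ext (funext hc))
  obtain ⟨g, hg⟩ := hex
  have hρ1 : ρ ((f : ∀ _ : G, H) g) ≠ 1 := fun hc =>
    hg (hρinj (hc.trans (map_one ρ).symm))
  have hex2 : ∃ x, ((ρ ((f : ∀ _ : G, H) g) : K) : X ≃ₜ X) x ≠ x := by
    by_contra hc
    push_neg at hc
    exact hρ1 (Subtype.ext (Homeomorph.ext hc))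
  obtain ⟨x, hx⟩ := hex2
  have hxU : x ∈ U := by
    by_contra h
    exact hx (hρ _ x h)
  set y := ((φ g : K) : X ≃ₜ X) x with hy
  have hyim : y ∈ ⇑((φ g : K) : X ≃ₜ X) '' U := ⟨x, hxU, rfl⟩
  classical
  have hgmem : g ∈ suppFinset f := mem_suppFinset.mpr hg
  have hsplit := Finset.mul_noncommProd_erase (suppFinset f) hgmem
    (fun g' => cpy φ ρ g' ((f : ∀ _ : G, H) g'))
    (cpy_pairwise φ ρ U hρ hdem _ _)
  have hrest : ∀ g' ∈ (suppFinset f).erase g,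
      ((cpy φ ρ g' ((f : ∀ _ : G, H) g') : K) : X ≃ₜ X) y = y := by
    intro g' hg'
    have hgg' : g' ≠ g := (Finset.mem_erase.mp hg').1
    exact cpy_supp φ ρ U hρ g' _ y
      (fun hc => Set.disjoint_left.mp (hdem g' g hgg') hc hyim)
  have hresty : ((((suppFinset f).erase g).noncommProd
      (fun g' => cpy φ ρ g' ((f : ∀ _ : G, H) g'))
      (cpy_pairwise φ ρ U hρ hdem _ _) : K) : X ≃ₜ X) y = y := by
    refine Finset.noncommProd_induction _ _
      (cpy_pairwise φ ρ U hρ hdem _ _) (fun k : K => ((k : X ≃ₜ X)) y = y)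
      ?_ rfl hrest
    intro a b hpa hpb
    show ((a : X ≃ₜ X) * (b : X ≃ₜ X)) y = y
    rw [hmul_apply, hpb, hpa]
  have hiota : ((iotaHom φ ρ U hρ hdem f : K) : X ≃ₜ X) y =
      ((cpy φ ρ g ((f : ∀ _ : G, H) g) : K) : X ≃ₜ X) y := by
    show (((suppFinset f).noncommProd
      (fun g' => cpy φ ρ g' ((f : ∀ _ : G, H) g'))
      (cpy_pairwise φ ρ U hρ hdem _ _) : K) : X ≃ₜ X) y = _
    rw [← hsplit, Subgroup.coe_mul, hmul_apply, hresty]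
  have hcy : ((cpy φ ρ g ((f : ∀ _ : G, H) g) : K) : X ≃ₜ X) y ≠ y := by
    show ((φ g : K) : X ≃ₜ X) (((ρ ((f : ∀ _ : G, H) g) : K) : X ≃ₜ X)
      (((φ g : K) : X ≃ₜ X).symm y)) ≠ y
    rw [hy, ((φ g : K) : X ≃ₜ X).symm_apply_apply]
    intro hc
    exact hx (((φ g : K) : X ≃ₜ X).injective hc)
  rw [hf] at hiota
  exact hcy (hiota.symm.trans (rfl : ((1 : K) : X ≃ₜ X) y = y))

include hρ hdem in
private lemma iota_maps_U (hUdem1 : ∀ g' : G, g' ≠ 1 →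
      Disjoint (⇑(φ g' : X ≃ₜ X) '' U) U)
    (f : restrictedPi G H) {z : X} (hz : z ∈ U) :
    ((iotaHom φ ρ U hρ hdem f : K) : X ≃ₜ X) z ∈ U := by
  show (((suppFinset f).noncommProd (fun g' => cpy φ ρ g' ((f : ∀ _ : G, H) g'))
    (cpy_pairwise φ ρ U hρ hdem _ _) : K) : X ≃ₜ X) z ∈ U
  refine Finset.noncommProd_induction _ _
    (cpy_pairwise φ ρ U hρ hdem _ _)
    (fun k : K => ∀ w ∈ U, ((k : X ≃ₜ X)) w ∈ U) ?_ (fun w hw => hw) ?_ z hz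
  · intro a b hpa hpb w hw
    show ((a : X ≃ₜ X) * (b : X ≃ₜ X)) w ∈ U
    rw [hmul_apply]
    exact hpa _ (hpb _ hw)
  · intro g' _ w hw
    by_cases hg1 : g' = 1
    · subst hg1
      show ((φ 1 : K) : X ≃ₜ X) (((ρ ((f : ∀ _ : G, H) 1) : K) : X ≃ₜ X)
        (((φ 1 : K) : X ≃ₜ X).symm w)) ∈ U
      rw [map_one φ]
      show ((ρ ((f : ∀ _ : G, H) 1) : K) : X ≃ₜ X) w ∈ U
      exact supp_mem (hρ _) hw
    · rw [cpy_supp φ ρ U hρ g' _ w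
        (fun hc => Set.disjoint_left.mp (hUdem1 g' hg1) hc hw)]
      exact hw

end WreathAux

/-- If `G` acts demonstratively on `X` inside `K`, and `K` contains a copy of a
fixed group `H` supported on every nonempty open set, then `⊕_{g ∈ G} H` embeds
into `K` with `G` normalizing the image and permuting the summands by left
translation; consequently `H ≀ G` embeds into `K`. -/
theorem wreath_embeds_of_demonstrative_copies {X : Type*} [TopologicalSpace X]
    (K : Subgroup (X ≃ₜ X)) {G H : Type*} [Group G] [Group H]
    (φ : G →* K) (hφ : Function.Injective φ)
    (U : Set X) (hUopen : IsOpen U) (hUne : U.Nonempty)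
    (hdem : ∀ g h : G, g ≠ h →
      Disjoint (⇑(φ g : X ≃ₜ X) '' U) (⇑(φ h : X ≃ₜ X) '' U))
    (hcopies : ∀ V : Set X, IsOpen V → V.Nonempty →
      ∃ ρ : H →* K, Function.Injective ρ ∧ ∀ h : H, ∀ x ∉ V, (ρ h : X ≃ₜ X) x = x) :
    ∃ ι : restrictedPi G H →* K, Function.Injective ι ∧
      (∀ g : G, ∀ f : restrictedPi G H,
        (φ g : K) * ι f * (φ g : K)⁻¹ = ι (restrictedLeftAut G H g f)) ∧
      ∃ ψ : RestrictedWreath H G →* K, Function.Injective ψ := by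
  classical
  obtain ⟨ρ, hρinj, hρsupp⟩ := hcopies U hUopen hUne
  have hUdem1 : ∀ g' : G, g' ≠ 1 → Disjoint (⇑(φ g' : X ≃ₜ X) '' U) U := by
    intro g' hg'
    have h := hdem g' 1 hg'
    rwa [map_one φ, show ⇑(((1 : K) : X ≃ₜ X)) = id from rfl, Set.image_id] at h
  refine ⟨iotaHom φ ρ U hρsupp hdem, iota_injective φ ρ U hρsupp hdem hρinj,
    fun g f => iota_conj φ ρ U hρsupp hdem g f, ?_⟩
  have hcompat : ∀ g : G, (iotaHom φ ρ U hρsupp hdem).comp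
      ((restrictedLeftAut G H) g).toMonoidHom =
      (MulAut.conj (φ g)).toMonoidHom.comp (iotaHom φ ρ U hρsupp hdem) := by
    intro g
    refine DFunLike.ext _ _ fun f => ?_
    show iotaHom φ ρ U hρsupp hdem (restrictedLeftAut G H g f) =
      MulAut.conj (φ g) (iotaHom φ ρ U hρsupp hdem f)
    rw [MulAut.conj_apply, iota_conj φ ρ U hρsupp hdem g f]
  refine ⟨SemidirectProduct.lift (iotaHom φ ρ U hρsupp hdem) φ hcompat, ?_⟩
  refine (injective_iff_map_eq_one _).mpr ?_
  intro w hw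
  have hw' : iotaHom φ ρ U hρsupp hdem (SemidirectProduct.left w) *
      φ (SemidirectProduct.right w) = 1 := hw
  have hright : SemidirectProduct.right w = 1 := by
    by_contra hg
    have h1 : iotaHom φ ρ U hρsupp hdem (SemidirectProduct.left w) =
        (φ (SemidirectProduct.right w))⁻¹ := eq_inv_of_mul_eq_one_left hw'
    obtain ⟨x, hxU⟩ := hUne
    have h2 : ((iotaHom φ ρ U hρsupp hdem (SemidirectProduct.left w) : K) :
        X ≃ₜ X) x ∈ U :=
      iota_maps_U φ ρ U hρsupp hdem hUdem1 _ hxU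
    rw [h1, ← map_inv φ] at h2
    have h3 : ((φ (SemidirectProduct.right w)⁻¹ : K) : X ≃ₜ X) x ∈
        ⇑((φ (SemidirectProduct.right w)⁻¹ : K) : X ≃ₜ X) '' U := ⟨x, hxU, rfl⟩
    exact Set.disjoint_left.mp
      (hUdem1 (SemidirectProduct.right w)⁻¹ (inv_ne_one.mpr hg)) h3 h2
  have hleft : SemidirectProduct.left w = 1 := by
    have h1 : iotaHom φ ρ U hρsupp hdem (SemidirectProduct.left w) = 1 := by
      rw [hright, map_one, mul_one] at hw'
      exact hw'
    refine iota_injective φ ρ U hρsupp hdem hρinj ?_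
    rw [h1, map_one]
  exact SemidirectProduct.ext hleft hright
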